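/- arXiv:2303.03237 — 2 statements merged into one kernel-verified Lean document; each statement's English description precedes it below -/
import Mathlib

section
/- Let d ≥ 1, X = [0,1]^d, and let f : X → ℝ be bounded and measurable. Then the thermodynamic integration identity holds: L_f = ∫_0^1 ( ∫_X f(x) dP_{βf}(x) ) dβ, i.e., the log-partition function of f equals the integral over inverse temperatures β ∈ [0,1] of the mean of f under the Gibbs measure P_{βf}. -/
open MeasureTheory Real

noncomputable section

/-- The unit cube `[0,1]^d` in `ℝ^d`. -/
def cube (d : ℕ) : Set (Fin d → ℝ) := Set.Icc 0 1

/-- The partition function `Z_f = ∫_X exp(f(x)) dx`. -/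
def partZ {d : ℕ} (f : (Fin d → ℝ) → ℝ) : ℝ := ∫ x in cube d, Real.exp (f x)

/-- The log-partition function `L_f = log Z_f`. -/
def logPart {d : ℕ} (f : (Fin d → ℝ) → ℝ) : ℝ := Real.log (partZ f)

/-- The Gibbs measure `P_f` with density `exp(f(x))/Z_f` w.r.t. Lebesgue measure on the cube. -/
def gibbs {d : ℕ} (f : (Fin d → ℝ) → ℝ) : Measure (Fin d → ℝ) :=
  (volume.restrict (cube d)).withDensity fun x => ENNReal.ofReal (Real.exp (f x) / partZ f)

/-- Essential supremum norm `‖h‖_∞` over the cube. -/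
def supNormOn {d : ℕ} (h : (Fin d → ℝ) → ℝ) : ℝ :=
  essSup (fun x => |h x|) (volume.restrict (cube d))

/-- Total variation distance between two measures: `sup_A |P(A) − Q(A)|`. -/
def DTV {α : Type*} [MeasurableSpace α] (P Q : Measure α) : ℝ :=
  ⨆ A : {A : Set α // MeasurableSet A}, |(P A.1).toReal - (Q A.1).toReal|

/-- `f` is bounded on the cube. -/
def BddOnCube {d : ℕ} (f : (Fin d → ℝ) → ℝ) : Prop := ∃ C, ∀ x ∈ cube d, |f x| ≤ C

lemma volume_cube (d : ℕ) : volume (cube d) = 1 := by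
  simp [cube, Real.volume_Icc_pi]

/-- thermodynamic integration identity, Section 3.3:
for bounded measurable `f` on `X = [0,1]^d`,
`L_f = ∫_0^1 (∫_X f dP_{βf}) dβ`. -/
theorem thermodynamic_integration_identity (d : ℕ) (hd : 1 ≤ d) (f : (Fin d → ℝ) → ℝ)
    (hmeas : Measurable f) (hbdd : BddOnCube f) :
    logPart f = ∫ β in Set.Icc (0 : ℝ) 1, (∫ x, f x ∂(gibbs (fun y => β * f y))) := by
  obtain ⟨C₀, hC₀⟩ := hbdd
  set C : ℝ := max C₀ 0 with hC
  have hCnn : 0 ≤ C := le_max_right _ _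
  have hC' : ∀ x ∈ cube d, |f x| ≤ C := fun x hx => (hC₀ x hx).trans (le_max_left _ _)
  set μ : Measure (Fin d → ℝ) := volume.restrict (cube d) with hμ
  have hcube : MeasurableSet (cube d) := measurableSet_Icc
  have hprob : IsProbabilityMeasure μ := ⟨by
    rw [hμ, Measure.restrict_apply_univ, volume_cube]⟩
  have haebd : ∀ᵐ x ∂μ, |f x| ≤ C :=
    (ae_restrict_iff' hcube).2 (Filter.Eventually.of_forall hC')
  -- key integrability lemma
  have key : ∀ R : ℝ, Integrable (fun x => Real.exp (R * C)) μ := fun R => integrable_const _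
  have hint_exp : ∀ β : ℝ, Integrable (fun x => Real.exp (β * f x)) μ := by
    intro β
    refine Integrable.mono' (key |β|) ((hmeas.const_mul β).exp.aestronglyMeasurable) ?_
    filter_upwards [haebd] with x hx
    rw [Real.norm_eq_abs, abs_of_pos (Real.exp_pos _)]
    apply Real.exp_le_exp.2
    calc β * f x ≤ |β * f x| := le_abs_self _
      _ = |β| * |f x| := abs_mul _ _
      _ ≤ |β| * C := by
          exact mul_le_mul_of_nonneg_left hx (abs_nonneg _)
  have hint_fexp : ∀ β : ℝ, Integrable (fun x => f x * Real.exp (β * f x)) μ := by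
    intro β
    have : Integrable (fun _ : Fin d → ℝ => C * Real.exp (|β| * C)) μ := integrable_const _
    refine Integrable.mono' this ((hmeas.mul (hmeas.const_mul β).exp).aestronglyMeasurable) ?_
    filter_upwards [haebd] with x hx
    rw [Real.norm_eq_abs, abs_mul, abs_of_pos (Real.exp_pos _)]
    apply mul_le_mul hx ?_ (Real.exp_pos _).le hCnn
    apply Real.exp_le_exp.2
    calc β * f x ≤ |β * f x| := le_abs_self _
      _ = |β| * |f x| := abs_mul _ _
      _ ≤ |β| * C := mul_le_mul_of_nonneg_left hx (abs_nonneg _)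
  set Z : ℝ → ℝ := fun β => ∫ x, Real.exp (β * f x) ∂μ with hZ
  have hZpos : ∀ β, 0 < Z β := by
    intro β
    have h1 : (∫ _x, Real.exp (-(|β| * C)) ∂μ) ≤ Z β := by
      refine integral_mono_ae (integrable_const _) (hint_exp β) ?_
      filter_upwards [haebd] with x hx
      apply Real.exp_le_exp.2
      calc -(|β| * C) ≤ -|β * f x| := by
            rw [neg_le_neg_iff, abs_mul]
            exact mul_le_mul_of_nonneg_left hx (abs_nonneg _)
        _ ≤ β * f x := neg_abs_le _
    have h2 : (∫ _x, Real.exp (-(|β| * C)) ∂μ) = Real.exp (-(|β| * C)) := by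
      simp [integral_const]
    calc (0:ℝ) < Real.exp (-(|β| * C)) := Real.exp_pos _
      _ ≤ Z β := h2 ▸ h1
  set Z' : ℝ → ℝ := fun β => ∫ x, f x * Real.exp (β * f x) ∂μ with hZ'
  -- derivative of Z
  have hZderiv : ∀ β : ℝ, HasDerivAt Z (Z' β) β := by
    intro β₀
    have := hasDerivAt_integral_of_dominated_loc_of_deriv_le (μ := μ)
      (F := fun β x => Real.exp (β * f x)) (F' := fun β x => f x * Real.exp (β * f x))
      (x₀ := β₀) (s := Metric.ball β₀ 1) (bound := fun x => C * Real.exp ((|β₀| + 1) * C))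
      (Metric.ball_mem_nhds _ one_pos)
      (Filter.Eventually.of_forall fun β => ((hmeas.const_mul β).exp.aestronglyMeasurable))
      (hint_exp β₀)
      ((hmeas.mul (hmeas.const_mul β₀).exp).aestronglyMeasurable)
      ?_ (integrable_const _) ?_
    · exact this.2
    · filter_upwards [haebd] with x hx
      intro β hβ
      rw [Real.norm_eq_abs, abs_mul, abs_of_pos (Real.exp_pos _)]
      have hβle : |β| ≤ |β₀| + 1 := by
        have := mem_ball_iff_norm.1 hβ
        calc |β| = |β₀ + (β - β₀)| := by ring_nf
          _ ≤ |β₀| + |β - β₀| := abs_add_le _ _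
          _ ≤ |β₀| + 1 := by
              rw [Real.norm_eq_abs] at this; linarith
      apply mul_le_mul hx ?_ (Real.exp_pos _).le hCnn
      apply Real.exp_le_exp.2
      calc β * f x ≤ |β * f x| := le_abs_self _
        _ = |β| * |f x| := abs_mul _ _
        _ ≤ (|β₀| + 1) * C :=
            mul_le_mul hβle hx (abs_nonneg _) (by positivity)
    · refine Filter.Eventually.of_forall fun x => fun β _ => ?_
      simpa [mul_comm] using ((hasDerivAt_id β).mul_const (f x)).exp
  -- identification of the Gibbs mean
  have hgibbs : ∀ β : ℝ, (∫ x, f x ∂(gibbs (fun y => β * f y))) = Z' β / Z β := by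
    intro β
    have hZeq : partZ (fun y => β * f y) = Z β := rfl
    have hd_meas : Measurable fun x => (Real.exp (β * f x) / Z β).toNNReal :=
      (((hmeas.const_mul β).exp.div_const _)).real_toNNReal
    have : gibbs (fun y => β * f y)
        = μ.withDensity fun x => ((Real.exp (β * f x) / Z β).toNNReal : ENNReal) := by
      simp only [gibbs, hZeq, ← hμ, ENNReal.ofReal]
    rw [this, integral_withDensity_eq_integral_smul hd_meas]
    have : ∀ x, ((Real.exp (β * f x) / Z β).toNNReal : NNReal) • f x
        = (Real.exp (β * f x) / Z β) * f x := by
      intro x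
      rw [NNReal.smul_def, smul_eq_mul, Real.coe_toNNReal]
      positivity
    simp only [this]
    rw [div_eq_mul_inv (Z' β), ← integral_mul_const]
    congr 1 with x
    ring
  -- FTC
  have hF : ∀ β ∈ Set.uIcc (0:ℝ) 1, HasDerivAt (fun b => Real.log (Z b)) (Z' β / Z β) β := by
    intro β _
    exact (hZderiv β).log (hZpos β).ne'
  have hContZ : Continuous Z := by
    have : Differentiable ℝ Z := fun β => (hZderiv β).differentiableAt
    exact this.continuous
  have hContZ' : Continuous Z' := by
    rw [continuous_iff_continuousAt]
    intro β₀
    refine continuousAt_of_dominated (bound := fun x => C * Real.exp ((|β₀| + 1) * C))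
      (Filter.Eventually.of_forall fun β =>
        (hmeas.mul (hmeas.const_mul β).exp).aestronglyMeasurable) ?_ (integrable_const _) ?_
    · have hball : Metric.ball β₀ 1 ∈ nhds β₀ := Metric.ball_mem_nhds _ one_pos
      filter_upwards [hball] with β hβ
      filter_upwards [haebd] with x hx
      rw [Real.norm_eq_abs, abs_mul, abs_of_pos (Real.exp_pos _)]
      have hβle : |β| ≤ |β₀| + 1 := by
        have := mem_ball_iff_norm.1 hβ
        calc |β| = |β₀ + (β - β₀)| := by ring_nf
          _ ≤ |β₀| + |β - β₀| := abs_add_le _ _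
          _ ≤ |β₀| + 1 := by
              rw [Real.norm_eq_abs] at this; linarith
      apply mul_le_mul hx ?_ (Real.exp_pos _).le hCnn
      apply Real.exp_le_exp.2
      calc β * f x ≤ |β * f x| := le_abs_self _
        _ = |β| * |f x| := abs_mul _ _
        _ ≤ (|β₀| + 1) * C :=
            mul_le_mul hβle hx (abs_nonneg _) (by positivity)
    · refine Filter.Eventually.of_forall fun x => ?_
      exact (continuous_const.mul ((continuous_id.mul continuous_const).rexp)).continuousAt
  have hContg : Continuous fun β => Z' β / Z β :=
    hContZ'.div hContZ fun β => (hZpos β).ne'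
  have hftc : (∫ β in (0:ℝ)..1, Z' β / Z β)
      = Real.log (Z 1) - Real.log (Z 0) :=
    intervalIntegral.integral_eq_sub_of_hasDerivAt hF
      (hContg.intervalIntegrable 0 1)
  have hZ0 : Z 0 = 1 := by
    have : Z 0 = ∫ _x, (1:ℝ) ∂μ := by
      simp [hZ]
    rw [this]; simp
  have hZ1 : Real.log (Z 1) = logPart f := by
    simp only [logPart, partZ, hZ, hμ, one_mul]
  calc logPart f = Real.log (Z 1) - Real.log (Z 0) := by
        rw [hZ1, hZ0, Real.log_one, sub_zero]
    _ = ∫ β in (0:ℝ)..1, Z' β / Z β := hftc.symm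
    _ = ∫ β in Set.Ioc (0:ℝ) 1, Z' β / Z β := intervalIntegral.integral_of_le zero_le_one
    _ = ∫ β in Set.Icc (0:ℝ) 1, Z' β / Z β := (integral_Icc_eq_integral_Ioc).symm
    _ = ∫ β in Set.Icc (0 : ℝ) 1, (∫ x, f x ∂(gibbs (fun y => β * f y))) := by
        refine setIntegral_congr_fun measurableSet_Icc fun β _ => (hgibbs β).symm
end
end

section
/- Let d ≥ 1, X = [0,1]^d, and let p, q : X → [0,∞) be bounded and measurable with I_p := ∫_X p(x) dx > 0 and I_q := ∫_X q(x) dx > 0. Let P and Q be the probability measures with densities p/I_p and q/I_q respectively. Then: (i) if ‖p − q‖_∞ < I_p, then |log I_p − log I_q| ≤ log( 1 / (1 − ‖p − q‖_∞ / I_p) ); (ii) D_TV(P, Q) ≤ 3·‖p − q‖_∞ / max{I_p, I_q}. -/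
open MeasureTheory Real

noncomputable section

lemma cube_measurable (d : ℕ) : MeasurableSet (cube d) := measurableSet_Icc

instance cube_finite (d : ℕ) : IsFiniteMeasure (volume.restrict (cube d)) := by
  constructor
  rw [Measure.restrict_apply_univ, volume_cube]
  exact ENNReal.one_lt_top

lemma integrable_of_bdd {d : ℕ} {f : (Fin d → ℝ) → ℝ} (hf : Measurable f)
    {C : ℝ} (hC : ∀ x ∈ cube d, |f x| ≤ C) :
    Integrable f (volume.restrict (cube d)) := by
  refine (integrable_const C).mono' hf.aestronglyMeasurable ?_
  filter_upwards [ae_restrict_mem (cube_measurable d)] with x hx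
  simpa using hC x hx

lemma integral_const_cube (c : ℝ) (d : ℕ) :
    ∫ (_ : Fin d → ℝ) , c ∂(volume.restrict (cube d)) = c := by
  rw [integral_const, Measure.real, Measure.restrict_apply_univ, volume_cube]
  simp

/-- integral of abs of the difference is at most an a.e. bound. -/
lemma integral_abs_le {d : ℕ} {p q : (Fin d → ℝ) → ℝ}
    (hint : Integrable (fun x => |p x - q x|) (volume.restrict (cube d)))
    {ε : ℝ} (hε : ∀ᵐ x ∂(volume.restrict (cube d)), |p x - q x| ≤ ε) :
    ∫ x in cube d, |p x - q x| ≤ ε := by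
  calc ∫ x in cube d, |p x - q x|
      ≤ ∫ (_ : Fin d → ℝ), ε ∂(volume.restrict (cube d)) :=
        integral_mono_ae hint (integrable_const ε) hε
    _ = ε := integral_const_cube ε d

lemma aux_tv (d : ℕ) (p q : (Fin d → ℝ) → ℝ)
    (hq0 : ∀ x, 0 ≤ q x)
    (Ip Iq : ℝ) (hIp : Ip = ∫ x in cube d, p x) (hIq : Iq = ∫ x in cube d, q x)
    (hIp0 : 0 < Ip) (hIq0 : 0 < Iq)
    (intp : Integrable p (volume.restrict (cube d)))
    (intq : Integrable q (volume.restrict (cube d)))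
    (intabs : Integrable (fun x => |p x - q x|) (volume.restrict (cube d)))
    (ε : ℝ)
    (hε : ∀ᵐ x ∂(volume.restrict (cube d)), |p x - q x| ≤ ε) :
    ∫ x in cube d, |p x / Ip - q x / Iq| ≤ 2 * ε / Ip := by
  set μ := volume.restrict (cube d) with hμ
  have key : |Iq - Ip| ≤ ε := by
    rw [hIp, hIq, ← integral_sub intq intp]
    calc |∫ x in cube d, (q x - p x)| ≤ ∫ x in cube d, |q x - p x| := by
          simpa [Real.norm_eq_abs] using
            norm_integral_le_integral_norm (μ := μ) (fun x => q x - p x)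
      _ = ∫ x in cube d, |p x - q x| := by simp [abs_sub_comm]
      _ ≤ ε := integral_abs_le intabs hε
  have hintq_abs : ∫ x in cube d, |p x - q x| ≤ ε := integral_abs_le intabs hε
  have hptw : ∀ x, |p x / Ip - q x / Iq| ≤ |p x - q x| / Ip + q x * |Iq - Ip| / (Ip * Iq) := by
    intro x
    have hid : p x / Ip - q x / Iq = (p x - q x) / Ip + q x * (Iq - Ip) / (Ip * Iq) := by
      field_simp; ring
    rw [hid]
    calc |(p x - q x) / Ip + q x * (Iq - Ip) / (Ip * Iq)|
        ≤ |(p x - q x) / Ip| + |q x * (Iq - Ip) / (Ip * Iq)| := abs_add_le _ _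
      _ = |p x - q x| / Ip + q x * |Iq - Ip| / (Ip * Iq) := by
          rw [abs_div, abs_div, abs_mul, abs_mul, abs_of_pos hIp0,
            abs_of_pos hIq0, abs_of_nonneg (hq0 x)]
  have int1 : Integrable (fun x => |p x - q x| / Ip) μ := intabs.div_const Ip
  have int2 : Integrable (fun x => q x * |Iq - Ip| / (Ip * Iq)) μ :=
    (intq.mul_const (|Iq - Ip|)).div_const (Ip * Iq)
  have intLHS : Integrable (fun x => |p x / Ip - q x / Iq|) μ :=
    ((intp.div_const Ip).sub (intq.div_const Iq)).abs
  calc ∫ x in cube d, |p x / Ip - q x / Iq|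
      ≤ ∫ x in cube d, (|p x - q x| / Ip + q x * |Iq - Ip| / (Ip * Iq)) :=
        integral_mono intLHS (int1.add int2) hptw
    _ = (∫ x in cube d, |p x - q x|) / Ip + (∫ x in cube d, q x) * |Iq - Ip| / (Ip * Iq) := by
        rw [integral_add int1 int2, integral_div, integral_div, integral_mul_const]
    _ = (∫ x in cube d, |p x - q x|) / Ip + |Iq - Ip| / Ip := by
        rw [← hIq]; field_simp
    _ ≤ ε / Ip + ε / Ip := by gcongr
    _ = 2 * ε / Ip := by ring

/-- Proposition 4.1, density approximation bounds.
For bounded measurable `p, q : X → [0,∞)` with `I_p = ∫ p > 0`, `I_q = ∫ q > 0`, and `P, Q`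
the probability measures with densities `p/I_p`, `q/I_q`:
(i) if `‖p − q‖_∞ < I_p` then `|log I_p − log I_q| ≤ log(1/(1 − ‖p − q‖_∞/I_p))`;
(ii) `D_TV(P, Q) ≤ 3 ‖p − q‖_∞ / max{I_p, I_q}`. -/
theorem density_approximation_bounds (d : ℕ) (hd : 1 ≤ d)
    (p q : (Fin d → ℝ) → ℝ)
    (hpm : Measurable p) (hqm : Measurable q)
    (hp0 : ∀ x, 0 ≤ p x) (hq0 : ∀ x, 0 ≤ q x)
    (hpb : BddOnCube p) (hqb : BddOnCube q)
    (Ip Iq : ℝ) (hIp : Ip = ∫ x in cube d, p x) (hIq : Iq = ∫ x in cube d, q x)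
    (hIp0 : 0 < Ip) (hIq0 : 0 < Iq)
    (P Q : Measure (Fin d → ℝ))
    (hP : P = (volume.restrict (cube d)).withDensity fun x => ENNReal.ofReal (p x / Ip))
    (hQ : Q = (volume.restrict (cube d)).withDensity fun x => ENNReal.ofReal (q x / Iq)) :
    (supNormOn (fun x => p x - q x) < Ip →
      |Real.log Ip - Real.log Iq| ≤ Real.log (1 / (1 - supNormOn (fun x => p x - q x) / Ip))) ∧
    DTV P Q ≤ 3 * supNormOn (fun x => p x - q x) / max Ip Iq := by
  set μ := volume.restrict (cube d) with hμ
  set ε := supNormOn (fun x => p x - q x) with hεdef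
  obtain ⟨Cp, hCp⟩ := hpb
  obtain ⟨Cq, hCq⟩ := hqb
  have intp : Integrable p μ := integrable_of_bdd hpm hCp
  have intq : Integrable q μ := integrable_of_bdd hqm hCq
  have intabs : Integrable (fun x => |p x - q x|) μ := (intp.sub intq).abs
  have hεae : ∀ᵐ x ∂μ, |p x - q x| ≤ ε := by
    apply ae_le_essSup
    refine ⟨Cp + Cq, ?_⟩
    rw [Filter.eventually_map]
    filter_upwards [ae_restrict_mem (cube_measurable d)] with x hx
    have h1 := abs_le.mp (hCp x hx)
    have h2 := abs_le.mp (hCq x hx)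
    rw [abs_le]; constructor <;> linarith
  have key : |Ip - Iq| ≤ ε := by
    rw [hIp, hIq, ← integral_sub intp intq]
    calc |∫ x in cube d, (p x - q x)|
        ≤ ∫ x in cube d, |p x - q x| := by
          simpa [Real.norm_eq_abs] using
            norm_integral_le_integral_norm (μ := μ) (fun x => p x - q x)
      _ ≤ ε := integral_abs_le intabs hεae
  have hε0 : 0 ≤ ε := le_trans (abs_nonneg _) key
  have hkey := abs_le.mp key
  constructor
  · intro hlt
    have hden : 0 < Ip - ε := by linarith
    have hrw : 1 / (1 - ε / Ip) = Ip / (Ip - ε) := by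
      have h1 : 1 - ε / Ip = (Ip - ε) / Ip := by field_simp
      rw [h1, one_div_div]
    rw [hrw, abs_sub_le_iff]
    constructor
    · rw [← Real.log_div hIp0.ne' hIq0.ne']
      apply Real.log_le_log (div_pos hIp0 hIq0)
      rw [div_le_div_iff₀ hIq0 hden]
      nlinarith [hkey.2]
    · rw [← Real.log_div hIq0.ne' hIp0.ne']
      apply Real.log_le_log (div_pos hIq0 hIp0)
      rw [div_le_div_iff₀ hIp0 hden]
      nlinarith [mul_le_mul_of_nonneg_right (show Iq ≤ Ip + ε by linarith [hkey.1]) hden.le,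
        sq_nonneg ε]
  · have hM : 0 < max Ip Iq := lt_of_lt_of_le hIp0 (le_max_left _ _)
    have h1 : ∫ x in cube d, |p x / Ip - q x / Iq| ≤ 2 * ε / Ip :=
      aux_tv d p q hq0 Ip Iq hIp hIq hIp0 hIq0 intp intq intabs ε hεae
    have h2 : ∫ x in cube d, |p x / Ip - q x / Iq| ≤ 2 * ε / Iq := by
      have h2' : ∫ x in cube d, |q x / Iq - p x / Ip| ≤ 2 * ε / Iq :=
        aux_tv d q p hp0 Iq Ip hIq hIp hIq0 hIp0 intq intp
          (by simpa [abs_sub_comm] using intabs) ε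
          (by filter_upwards [hεae] with x h; rwa [abs_sub_comm])
      calc ∫ x in cube d, |p x / Ip - q x / Iq|
          = ∫ x in cube d, |q x / Iq - p x / Ip| := by simp [abs_sub_comm]
        _ ≤ 2 * ε / Iq := h2'
    have hI : ∫ x in cube d, |p x / Ip - q x / Iq| ≤ 2 * ε / max Ip Iq := by
      rcases le_total Ip Iq with h | h
      · rw [max_eq_right h]; exact h2
      · rw [max_eq_left h]; exact h1
    have intLHS : Integrable (fun x => |p x / Ip - q x / Iq|) μ :=
      ((intp.div_const Ip).sub (intq.div_const Iq)).abs
    have hset : ∀ A : {A : Set (Fin d → ℝ) // MeasurableSet A},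
        |(P A.1).toReal - (Q A.1).toReal| ≤ 2 * ε / max Ip Iq := by
      rintro ⟨A, hA⟩
      have hPA : (P A).toReal = ∫ x, p x / Ip ∂(μ.restrict A) := by
        rw [hP, withDensity_apply _ hA,
          ← ofReal_integral_eq_lintegral_ofReal ((intp.div_const Ip).restrict)
            (Filter.Eventually.of_forall fun x => div_nonneg (hp0 x) hIp0.le)]
        exact ENNReal.toReal_ofReal (integral_nonneg fun x => div_nonneg (hp0 x) hIp0.le)
      have hQA : (Q A).toReal = ∫ x, q x / Iq ∂(μ.restrict A) := by
        rw [hQ, withDensity_apply _ hA,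
          ← ofReal_integral_eq_lintegral_ofReal ((intq.div_const Iq).restrict)
            (Filter.Eventually.of_forall fun x => div_nonneg (hq0 x) hIq0.le)]
        exact ENNReal.toReal_ofReal (integral_nonneg fun x => div_nonneg (hq0 x) hIq0.le)
      simp only [hPA, hQA]
      rw [← integral_sub ((intp.div_const Ip).restrict) ((intq.div_const Iq).restrict)]
      calc |∫ x, (p x / Ip - q x / Iq) ∂(μ.restrict A)|
          ≤ ∫ x, |p x / Ip - q x / Iq| ∂(μ.restrict A) := by
            simpa [Real.norm_eq_abs] using
              norm_integral_le_integral_norm (μ := μ.restrict A)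
                (fun x => p x / Ip - q x / Iq)
        _ ≤ ∫ x, |p x / Ip - q x / Iq| ∂μ :=
            integral_mono_measure Measure.restrict_le_self
              (Filter.Eventually.of_forall fun x => abs_nonneg _) intLHS
        _ ≤ 2 * ε / max Ip Iq := hI
    haveI : Nonempty {A : Set (Fin d → ℝ) // MeasurableSet A} :=
      ⟨⟨∅, MeasurableSet.empty⟩⟩
    calc DTV P Q ≤ 2 * ε / max Ip Iq := ciSup_le hset
      _ ≤ 3 * ε / max Ip Iq := by gcongr; linarith
end
end
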